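/- arXiv:1007.3049 — 2 statements merged into one kernel-verified Lean document; each statement's English description precedes it below -/
import Mathlib

section
/- Every indecomposable tournament of cardinality at least 5 admits an indecomposable subtournament on exactly 5 vertices. -/
/-- A tournament on vertex type `V`, given by its arc relation. -/
def IsTournament {V : Type*} (r : V → V → Prop) : Prop :=
  (∀ x, ¬ r x x) ∧ ∀ x y : V, x ≠ y → (r x y ↔ ¬ r y x)

/-- `I` is an interval of the subtournament of `r` induced on `X`. -/
def IsIntervalOn {V : Type*} (r : V → V → Prop) (X I : Set V) : Prop :=
  I ⊆ X ∧ ∀ x ∈ X \ I, (∀ i ∈ I, r x i) ∨ (∀ i ∈ I, r i x)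

/-- The subtournament induced on `X` is indecomposable: all its intervals are trivial. -/
def IndecomposableOn {V : Type*} (r : V → V → Prop) (X : Set V) : Prop :=
  ∀ I : Set V, IsIntervalOn r X I → I = ∅ ∨ (∃ a, I = {a}) ∨ I = X

/-- The dual tournament, obtained by reversing all arcs. -/
def dual {V : Type*} (r : V → V → Prop) : V → V → Prop := fun x y => r y x

/-- `s` embeds into `r`: `s` is isomorphic to an induced subtournament of `r`. -/
def Embeds {W V : Type*} (s : W → W → Prop) (r : V → V → Prop) : Prop :=
  ∃ f : W → V, Function.Injective f ∧ ∀ a b, s a b ↔ r (f a) (f b)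

/-- The 3-cycle C₃. -/
def C3 : ZMod 3 → ZMod 3 → Prop := fun i j => j = i + 1

/-- The critical tournament `T_{2n+1}` on `ZMod (2n+1)`: arc `i → j` iff `j - i ∈ {1,…,n}`. -/
def Tt (n : ℕ) : ZMod (2*n+1) → ZMod (2*n+1) → Prop :=
  fun i j => (j - i).val ∈ Finset.Icc 1 n

/-- The critical tournament `W_{2n+1}` on `Fin (2n+1)`:
`0 < 1 < ⋯ < 2n-1` and odds → `2n` → evens. -/
def Wt (n : ℕ) : Fin (2*n+1) → Fin (2*n+1) → Prop :=
  fun i j =>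
    if i.val = 2*n then j.val % 2 = 0 ∧ j.val ≠ 2*n
    else if j.val = 2*n then i.val % 2 = 1
    else i.val < j.val

/-- The diamond `D₄`: `{0,1,2}` is a 3-cycle and `3 → {0,1,2}`. -/
def D4 : Fin 4 → Fin 4 → Prop :=
  fun i j => (i = 3 ∧ j ≠ 3) ∨ (i ≠ 3 ∧ j ≠ 3 ∧ j.val = (i.val + 1) % 3)

/-- `U₅`: obtained from `T₅` by reversing the arc inside `{3,4}`. -/
def U5 : ZMod 5 → ZMod 5 → Prop :=
  fun i j =>
    if (i = 3 ∧ j = 4) ∨ (i = 4 ∧ j = 3) then Tt 2 j i else Tt 2 i j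

/-- The tournament `F_{n+1}` on `{0,…,n}`: arc `i → j` iff `i+1 < j` or `i = j+1`. -/
def Ft (n : ℕ) : Fin (n+1) → Fin (n+1) → Prop :=
  fun i j => i.val + 1 < j.val ∨ i.val = j.val + 1

/-- `Ext(X)`: vertices outside `X` extending `X` indecomposably. -/
def ExtSet {V : Type*} (r : V → V → Prop) (X : Set V) : Set V :=
  {x | x ∉ X ∧ IndecomposableOn r (X ∪ {x})}

/-- `[X]`: vertices outside `X` relating uniformly to `X`. -/
def BrSet {V : Type*} (r : V → V → Prop) (X : Set V) : Set V :=
  {x | x ∉ X ∧ ((∀ y ∈ X, r x y) ∨ (∀ y ∈ X, r y x))}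

/-- `X(u)`: vertices `x` outside `X` such that `{u,x}` is an interval of `T(X ∪ {x})`. -/
def XuSet {V : Type*} (r : V → V → Prop) (X : Set V) (u : V) : Set V :=
  {x | x ∉ X ∧ IsIntervalOn r (X ∪ {x}) {u, x}}

section Aux
variable {V : Type*} {r : V → V → Prop}

private lemma tasymm (h : IsTournament r) {x y : V} (hxy : r x y) : ¬ r y x := by
  by_cases hne : x = y
  · subst hne; exact fun _ => h.1 x hxy
  · exact fun hyx => ((h.2 x y hne).mp hxy) hyx

private lemma tne (h : IsTournament r) {x y : V} (hxy : r x y) : x ≠ y := by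
  rintro rfl; exact h.1 x hxy

private lemma ttotal (h : IsTournament r) {x y : V} (hne : x ≠ y) (hxy : ¬ r x y) : r y x := by
  by_contra hyx
  exact hxy ((h.2 x y hne).mpr hyx)

private lemma cycleIndec (h : IsTournament r) {a b c : V}
    (hab : r a b) (hbc : r b c) (hca : r c a) :
    IndecomposableOn r {a, b, c} := by
  intro I hI
  have hsub := hI.1
  have hmem : ∀ w ∈ I, w = a ∨ w = b ∨ w = c := fun w hw => by simpa using hsub hw
  by_cases haI : a ∈ I <;> by_cases hbI : b ∈ I <;> by_cases hcI : c ∈ I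
  · right; right
    refine Set.Subset.antisymm hsub ?_
    rintro w (rfl | rfl | rfl) <;> assumption
  · exfalso
    rcases hI.2 c ⟨by simp, hcI⟩ with hl | hr
    · exact tasymm h hbc (hl b hbI)
    · exact tasymm h hca (hr a haI)
  · exfalso
    rcases hI.2 b ⟨by simp, hbI⟩ with hl | hr
    · exact tasymm h hab (hl a haI)
    · exact tasymm h hbc (hr c hcI)
  · right; left
    refine ⟨a, Set.Subset.antisymm ?_ ?_⟩
    · intro w hw
      rcases hmem w hw with rfl | rfl | rfl
      · rfl
      · exact absurd hw hbI
      · exact absurd hw hcI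
    · rintro w rfl; exact haI
  · exfalso
    rcases hI.2 a ⟨by simp, haI⟩ with hl | hr
    · exact tasymm h hca (hl c hcI)
    · exact tasymm h hab (hr b hbI)
  · right; left
    refine ⟨b, Set.Subset.antisymm ?_ ?_⟩
    · intro w hw
      rcases hmem w hw with rfl | rfl | rfl
      · exact absurd hw haI
      · rfl
      · exact absurd hw hcI
    · rintro w rfl; exact hbI
  · right; left
    refine ⟨c, Set.Subset.antisymm ?_ ?_⟩
    · intro w hw
      rcases hmem w hw with rfl | rfl | rfl
      · exact absurd hw haI
      · exact absurd hw hbI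
      · rfl
    · rintro w rfl; exact hcI
  · left
    refine Set.eq_empty_iff_forall_notMem.mpr fun w hw => ?_
    rcases hmem w hw with rfl | rfl | rfl
    · exact haI hw
    · exact hbI hw
    · exact hcI hw
private lemma interval_mem_cases (h : IsTournament r) {a b c x z : V}
    (hab : r a b) (hbc : r b c) (hca : r c a)
    (hx : x ∉ ({a, b, c} : Set V)) (hz : z ∉ ({a, b, c} : Set V)) (hxz : x ≠ z)
    {I : Set V} (hI : IsIntervalOn r (({a, b, c} : Set V) ∪ {x, z}) I)
    (h0 : I ≠ ∅) (h1 : ∀ w, I ≠ {w}) (h2 : I ≠ ({a, b, c} : Set V) ∪ {x, z}) :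
    ((a ∈ I ∧ b ∈ I ∧ c ∈ I) ∧ ¬(x ∈ I ∧ z ∈ I)) ∨
    ((x ∈ I ∨ z ∈ I) ∧ ((a ∈ I ∧ b ∉ I ∧ c ∉ I) ∨ (a ∉ I ∧ b ∈ I ∧ c ∉ I) ∨
        (a ∉ I ∧ b ∉ I ∧ c ∈ I))) ∨
    ((a ∉ I ∧ b ∉ I ∧ c ∉ I) ∧ x ∈ I ∧ z ∈ I) := by
  classical
  have hne_ab : a ≠ b := tne h hab
  have hne_bc : b ≠ c := tne h hbc
  have hne_ca : c ≠ a := tne h hca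
  have hIS := hI.1
  have hmemS : ∀ w ∈ I, w = a ∨ w = b ∨ w = c ∨ w = x ∨ w = z := by
    intro w hw
    have := hIS hw
    simp only [Set.mem_union, Set.mem_insert_iff, Set.mem_singleton_iff] at this
    tauto
  have hJ : IsIntervalOn r {a, b, c} (I ∩ {a, b, c}) := by
    refine ⟨Set.inter_subset_right, ?_⟩
    intro w hw
    have hwI : w ∉ I := fun hwI => hw.2 ⟨hwI, hw.1⟩
    have hwS : w ∈ ({a, b, c} : Set V) ∪ {x, z} := Set.mem_union_left _ hw.1
    rcases hI.2 w ⟨hwS, hwI⟩ with hl | hr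
    · exact Or.inl fun i hi => hl i hi.1
    · exact Or.inr fun i hi => hr i hi.1
  rcases cycleIndec h hab hbc hca _ hJ with hJ0 | ⟨u, hJu⟩ | hJX
  · have haI : a ∉ I := fun haI =>
      Set.eq_empty_iff_forall_notMem.mp hJ0 a ⟨haI, by simp⟩
    have hbI : b ∉ I := fun hbI =>
      Set.eq_empty_iff_forall_notMem.mp hJ0 b ⟨hbI, by simp⟩
    have hcI : c ∉ I := fun hcI =>
      Set.eq_empty_iff_forall_notMem.mp hJ0 c ⟨hcI, by simp⟩
    have hxI : x ∈ I := by
      by_contra hxI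
      have honly : ∀ w ∈ I, w = z := by
        intro w hw
        rcases hmemS w hw with rfl | rfl | rfl | rfl | rfl
        exacts [absurd hw haI, absurd hw hbI, absurd hw hcI, absurd hw hxI, rfl]
      obtain ⟨w, hw⟩ := Set.nonempty_iff_ne_empty.mpr h0
      exact h1 z (Set.eq_singleton_iff_unique_mem.mpr ⟨(honly w hw) ▸ hw, honly⟩)
    have hzI : z ∈ I := by
      by_contra hzI
      have honly : ∀ w ∈ I, w = x := by
        intro w hw
        rcases hmemS w hw with rfl | rfl | rfl | rfl | rfl
        exacts [absurd hw haI, absurd hw hbI, absurd hw hcI, rfl, absurd hw hzI]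
      obtain ⟨w, hw⟩ := Set.nonempty_iff_ne_empty.mpr h0
      exact h1 x (Set.eq_singleton_iff_unique_mem.mpr ⟨(honly w hw) ▸ hw, honly⟩)
    exact Or.inr (Or.inr ⟨⟨haI, hbI, hcI⟩, hxI, hzI⟩)
  · have huI : u ∈ I ∧ u ∈ ({a, b, c} : Set V) := by
      have : u ∈ I ∩ {a, b, c} := by rw [hJu]; rfl
      exact ⟨this.1, this.2⟩
    have hother : ∀ v ∈ ({a, b, c} : Set V), v ≠ u → v ∉ I := by
      intro v hv hvu hvI
      have : v ∈ I ∩ {a, b, c} := ⟨hvI, hv⟩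
      rw [hJu] at this
      exact hvu this
    have hxor : x ∈ I ∨ z ∈ I := by
      by_contra hcon
      push_neg at hcon
      have honly : ∀ w ∈ I, w = u := by
        intro w hw
        rcases hmemS w hw with rfl | rfl | rfl | rfl | rfl
        · by_contra hne; exact hother w (by simp) hne hw
        · by_contra hne; exact hother w (by simp) hne hw
        · by_contra hne; exact hother w (by simp) hne hw
        · exact absurd hw hcon.1
        · exact absurd hw hcon.2
      exact h1 u (Set.eq_singleton_iff_unique_mem.mpr ⟨huI.1, honly⟩)
    refine Or.inr (Or.inl ⟨hxor, ?_⟩)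
    have hu3 : u = a ∨ u = b ∨ u = c := by simpa using huI.2
    rcases hu3 with rfl | rfl | rfl
    · exact Or.inl ⟨huI.1, hother b (by simp) hne_ab.symm, hother c (by simp) hne_ca⟩
    · exact Or.inr (Or.inl ⟨hother a (by simp) hne_ab, huI.1, hother c (by simp) hne_bc.symm⟩)
    · exact Or.inr (Or.inr ⟨hother a (by simp) hne_ca.symm, hother b (by simp) hne_bc, huI.1⟩)
  · have haI : a ∈ I := by
      have : a ∈ I ∩ {a, b, c} := by rw [hJX]; simp
      exact this.1
    have hbI : b ∈ I := by
      have : b ∈ I ∩ {a, b, c} := by rw [hJX]; simp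
      exact this.1
    have hcI : c ∈ I := by
      have : c ∈ I ∩ {a, b, c} := by rw [hJX]; simp
      exact this.1
    refine Or.inl ⟨⟨haI, hbI, hcI⟩, ?_⟩
    rintro ⟨hxI, hzI⟩
    apply h2
    refine Set.Subset.antisymm hIS ?_
    intro w hw
    simp only [Set.mem_union, Set.mem_insert_iff, Set.mem_singleton_iff] at hw
    rcases hw with (rfl | rfl | rfl) | (rfl | rfl) <;> assumption
private lemma pairB1 (h : IsTournament r) {a b c x z : V}
    (hab : r a b) (hbc : r b c) (hca : r c a)
    (hx : x ∉ ({a, b, c} : Set V)) (hxb : r x b) (hcx : r c x)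
    (hz : z ∉ ({a, b, c} : Set V)) (hxz : x ≠ z)
    (hza : r z a) (hzb : r z b) (hzc : r z c)
    (hdec : ¬ IndecomposableOn r (({a, b, c} : Set V) ∪ {x, z})) : r z x := by
  rw [IndecomposableOn] at hdec
  push_neg at hdec
  obtain ⟨I, hI, h0, h1, h2⟩ := hdec
  have hmc := interval_mem_cases h hab hbc hca hx hz hxz hI (Set.nonempty_iff_ne_empty.mp h0) h1 h2
  have hxS : x ∈ ({a, b, c} : Set V) ∪ {x, z} := by simp
  have hzS : z ∈ ({a, b, c} : Set V) ∪ {x, z} := by simp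
  have haS : a ∈ ({a, b, c} : Set V) ∪ {x, z} := by simp
  have hbS : b ∈ ({a, b, c} : Set V) ∪ {x, z} := by simp
  have hcS : c ∈ ({a, b, c} : Set V) ∪ {x, z} := by simp
  rcases hmc with ⟨⟨haI, hbI, hcI⟩, hnxz⟩ | ⟨hxor, hu⟩ | ⟨⟨haI, hbI, hcI⟩, hxI, hzI⟩
  · by_cases hxI : x ∈ I
    · have hzI : z ∉ I := fun hzI => hnxz ⟨hxI, hzI⟩
      rcases hI.2 z ⟨hzS, hzI⟩ with hl | hr
      · exact hl x hxI
      · exact absurd (hr a haI) (tasymm h hza)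
    · rcases hI.2 x ⟨hxS, hxI⟩ with hl | hr
      · exact absurd (hl c hcI) (tasymm h hcx)
      · exact absurd (hr b hbI) (tasymm h hxb)
  · rcases hu with ⟨haI, hbI, hcI⟩ | ⟨haI, hbI, hcI⟩ | ⟨haI, hbI, hcI⟩
    · by_cases hzI : z ∈ I
      · rcases hI.2 c ⟨hcS, hcI⟩ with hl | hr
        · exact absurd (hl z hzI) (tasymm h hzc)
        · exact absurd (hr a haI) (tasymm h hca)
      · have hxI : x ∈ I := hxor.resolve_right hzI
        rcases hI.2 z ⟨hzS, hzI⟩ with hl | hr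
        · exact hl x hxI
        · exact absurd (hr a haI) (tasymm h hza)
    · by_cases hzI : z ∈ I
      · rcases hI.2 a ⟨haS, haI⟩ with hl | hr
        · exact absurd (hl z hzI) (tasymm h hza)
        · exact absurd (hr b hbI) (tasymm h hab)
      · have hxI : x ∈ I := hxor.resolve_right hzI
        rcases hI.2 z ⟨hzS, hzI⟩ with hl | hr
        · exact hl x hxI
        · exact absurd (hr b hbI) (tasymm h hzb)
    · by_cases hzI : z ∈ I
      · rcases hI.2 b ⟨hbS, hbI⟩ with hl | hr
        · exact absurd (hl z hzI) (tasymm h hzb)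
        · exact absurd (hr c hcI) (tasymm h hbc)
      · have hxI : x ∈ I := hxor.resolve_right hzI
        rcases hI.2 z ⟨hzS, hzI⟩ with hl | hr
        · exact hl x hxI
        · exact absurd (hr c hcI) (tasymm h hzc)
  · rcases hI.2 c ⟨hcS, hcI⟩ with hl | hr
    · exact absurd (hl z hzI) (tasymm h hzc)
    · exact absurd (hr x hxI) (tasymm h hcx)

private lemma pairB2 (h : IsTournament r) {a b c x z : V}
    (hab : r a b) (hbc : r b c) (hca : r c a)
    (hx : x ∉ ({a, b, c} : Set V)) (hxb : r x b) (hcx : r c x)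
    (hz : z ∉ ({a, b, c} : Set V)) (hxz : x ≠ z)
    (haz : r a z) (hbz : r b z) (hcz : r c z)
    (hdec : ¬ IndecomposableOn r (({a, b, c} : Set V) ∪ {x, z})) : r x z := by
  rw [IndecomposableOn] at hdec
  push_neg at hdec
  obtain ⟨I, hI, h0, h1, h2⟩ := hdec
  have hmc := interval_mem_cases h hab hbc hca hx hz hxz hI (Set.nonempty_iff_ne_empty.mp h0) h1 h2
  have hxS : x ∈ ({a, b, c} : Set V) ∪ {x, z} := by simp
  have hzS : z ∈ ({a, b, c} : Set V) ∪ {x, z} := by simp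
  have haS : a ∈ ({a, b, c} : Set V) ∪ {x, z} := by simp
  have hbS : b ∈ ({a, b, c} : Set V) ∪ {x, z} := by simp
  have hcS : c ∈ ({a, b, c} : Set V) ∪ {x, z} := by simp
  rcases hmc with ⟨⟨haI, hbI, hcI⟩, hnxz⟩ | ⟨hxor, hu⟩ | ⟨⟨haI, hbI, hcI⟩, hxI, hzI⟩
  · by_cases hxI : x ∈ I
    · have hzI : z ∉ I := fun hzI => hnxz ⟨hxI, hzI⟩
      rcases hI.2 z ⟨hzS, hzI⟩ with hl | hr
      · exact absurd (hl a haI) (tasymm h haz)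
      · exact hr x hxI
    · rcases hI.2 x ⟨hxS, hxI⟩ with hl | hr
      · exact absurd (hl c hcI) (tasymm h hcx)
      · exact absurd (hr b hbI) (tasymm h hxb)
  · rcases hu with ⟨haI, hbI, hcI⟩ | ⟨haI, hbI, hcI⟩ | ⟨haI, hbI, hcI⟩
    · by_cases hzI : z ∈ I
      · rcases hI.2 b ⟨hbS, hbI⟩ with hl | hr
        · exact absurd (hl a haI) (tasymm h hab)
        · exact absurd (hr z hzI) (tasymm h hbz)
      · have hxI : x ∈ I := hxor.resolve_right hzI
        rcases hI.2 z ⟨hzS, hzI⟩ with hl | hr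
        · exact absurd (hl a haI) (tasymm h haz)
        · exact hr x hxI
    · by_cases hzI : z ∈ I
      · rcases hI.2 c ⟨hcS, hcI⟩ with hl | hr
        · exact absurd (hl b hbI) (tasymm h hbc)
        · exact absurd (hr z hzI) (tasymm h hcz)
      · have hxI : x ∈ I := hxor.resolve_right hzI
        rcases hI.2 z ⟨hzS, hzI⟩ with hl | hr
        · exact absurd (hl b hbI) (tasymm h hbz)
        · exact hr x hxI
    · by_cases hzI : z ∈ I
      · rcases hI.2 a ⟨haS, haI⟩ with hl | hr
        · exact absurd (hl c hcI) (tasymm h hca)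
        · exact absurd (hr z hzI) (tasymm h haz)
      · have hxI : x ∈ I := hxor.resolve_right hzI
        rcases hI.2 z ⟨hzS, hzI⟩ with hl | hr
        · exact absurd (hl c hcI) (tasymm h hcz)
        · exact hr x hxI
  · rcases hI.2 b ⟨hbS, hbI⟩ with hl | hr
    · exact absurd (hl x hxI) (tasymm h hxb)
    · exact absurd (hr z hzI) (tasymm h hbz)

private lemma pairAb (h : IsTournament r) {a b c x z : V}
    (hab : r a b) (hbc : r b c) (hca : r c a)
    (hx : x ∉ ({a, b, c} : Set V)) (hxb : r x b) (hcx : r c x)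
    (hz : z ∉ ({a, b, c} : Set V)) (hxz : x ≠ z)
    (hzc : r z c) (haz : r a z)
    (hdec : ¬ IndecomposableOn r (({a, b, c} : Set V) ∪ {x, z})) : r x z := by
  rw [IndecomposableOn] at hdec
  push_neg at hdec
  obtain ⟨I, hI, h0, h1, h2⟩ := hdec
  have hmc := interval_mem_cases h hab hbc hca hx hz hxz hI (Set.nonempty_iff_ne_empty.mp h0) h1 h2
  have hxS : x ∈ ({a, b, c} : Set V) ∪ {x, z} := by simp
  have hzS : z ∈ ({a, b, c} : Set V) ∪ {x, z} := by simp
  have haS : a ∈ ({a, b, c} : Set V) ∪ {x, z} := by simp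
  have hbS : b ∈ ({a, b, c} : Set V) ∪ {x, z} := by simp
  have hcS : c ∈ ({a, b, c} : Set V) ∪ {x, z} := by simp
  rcases hmc with ⟨⟨haI, hbI, hcI⟩, hnxz⟩ | ⟨hxor, hu⟩ | ⟨⟨haI, hbI, hcI⟩, hxI, hzI⟩
  · by_cases hxI : x ∈ I
    · have hzI : z ∉ I := fun hzI => hnxz ⟨hxI, hzI⟩
      rcases hI.2 z ⟨hzS, hzI⟩ with hl | hr
      · exact absurd (hl a haI) (tasymm h haz)
      · exact absurd (hr c hcI) (tasymm h hzc)
    · rcases hI.2 x ⟨hxS, hxI⟩ with hl | hr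
      · exact absurd (hl c hcI) (tasymm h hcx)
      · exact absurd (hr b hbI) (tasymm h hxb)
  · rcases hu with ⟨haI, hbI, hcI⟩ | ⟨haI, hbI, hcI⟩ | ⟨haI, hbI, hcI⟩
    · by_cases hzI : z ∈ I
      · rcases hI.2 c ⟨hcS, hcI⟩ with hl | hr
        · exact absurd (hl z hzI) (tasymm h hzc)
        · exact absurd (hr a haI) (tasymm h hca)
      · have hxI : x ∈ I := hxor.resolve_right hzI
        rcases hI.2 z ⟨hzS, hzI⟩ with hl | hr
        · exact absurd (hl a haI) (tasymm h haz)
        · exact hr x hxI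
    · by_cases hzI : z ∈ I
      · by_cases hxI : x ∈ I
        · rcases hI.2 c ⟨hcS, hcI⟩ with hl | hr
          · exact absurd (hl b hbI) (tasymm h hbc)
          · exact absurd (hr x hxI) (tasymm h hcx)
        · rcases hI.2 x ⟨hxS, hxI⟩ with hl | hr
          · exact hl z hzI
          · exact absurd (hr b hbI) (tasymm h hxb)
      · have hxI : x ∈ I := hxor.resolve_right hzI
        rcases hI.2 c ⟨hcS, hcI⟩ with hl | hr
        · exact absurd (hl b hbI) (tasymm h hbc)
        · exact absurd (hr x hxI) (tasymm h hcx)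
    · by_cases hzI : z ∈ I
      · rcases hI.2 a ⟨haS, haI⟩ with hl | hr
        · exact absurd (hl c hcI) (tasymm h hca)
        · exact absurd (hr z hzI) (tasymm h haz)
      · have hxI : x ∈ I := hxor.resolve_right hzI
        rcases hI.2 b ⟨hbS, hbI⟩ with hl | hr
        · exact absurd (hl x hxI) (tasymm h hxb)
        · exact absurd (hr c hcI) (tasymm h hbc)
  · rcases hI.2 c ⟨hcS, hcI⟩ with hl | hr
    · exact absurd (hl z hzI) (tasymm h hzc)
    · exact absurd (hr x hxI) (tasymm h hcx)

private lemma pairAc (h : IsTournament r) {a b c x z : V}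
    (hab : r a b) (hbc : r b c) (hca : r c a)
    (hx : x ∉ ({a, b, c} : Set V)) (hxb : r x b) (hcx : r c x)
    (hz : z ∉ ({a, b, c} : Set V)) (hxz : x ≠ z)
    (hza : r z a) (hbz : r b z)
    (hdec : ¬ IndecomposableOn r (({a, b, c} : Set V) ∪ {x, z})) : r z x := by
  rw [IndecomposableOn] at hdec
  push_neg at hdec
  obtain ⟨I, hI, h0, h1, h2⟩ := hdec
  have hmc := interval_mem_cases h hab hbc hca hx hz hxz hI (Set.nonempty_iff_ne_empty.mp h0) h1 h2
  have hxS : x ∈ ({a, b, c} : Set V) ∪ {x, z} := by simp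
  have hzS : z ∈ ({a, b, c} : Set V) ∪ {x, z} := by simp
  have haS : a ∈ ({a, b, c} : Set V) ∪ {x, z} := by simp
  have hbS : b ∈ ({a, b, c} : Set V) ∪ {x, z} := by simp
  have hcS : c ∈ ({a, b, c} : Set V) ∪ {x, z} := by simp
  rcases hmc with ⟨⟨haI, hbI, hcI⟩, hnxz⟩ | ⟨hxor, hu⟩ | ⟨⟨haI, hbI, hcI⟩, hxI, hzI⟩
  · by_cases hxI : x ∈ I
    · have hzI : z ∉ I := fun hzI => hnxz ⟨hxI, hzI⟩
      rcases hI.2 z ⟨hzS, hzI⟩ with hl | hr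
      · exact absurd (hl b hbI) (tasymm h hbz)
      · exact absurd (hr a haI) (tasymm h hza)
    · rcases hI.2 x ⟨hxS, hxI⟩ with hl | hr
      · exact absurd (hl c hcI) (tasymm h hcx)
      · exact absurd (hr b hbI) (tasymm h hxb)
  · rcases hu with ⟨haI, hbI, hcI⟩ | ⟨haI, hbI, hcI⟩ | ⟨haI, hbI, hcI⟩
    · by_cases hzI : z ∈ I
      · rcases hI.2 b ⟨hbS, hbI⟩ with hl | hr
        · exact absurd (hl a haI) (tasymm h hab)
        · exact absurd (hr z hzI) (tasymm h hbz)
      · have hxI : x ∈ I := hxor.resolve_right hzI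
        rcases hI.2 z ⟨hzS, hzI⟩ with hl | hr
        · exact hl x hxI
        · exact absurd (hr a haI) (tasymm h hza)
    · by_cases hzI : z ∈ I
      · rcases hI.2 a ⟨haS, haI⟩ with hl | hr
        · exact absurd (hl z hzI) (tasymm h hza)
        · exact absurd (hr b hbI) (tasymm h hab)
      · have hxI : x ∈ I := hxor.resolve_right hzI
        rcases hI.2 c ⟨hcS, hcI⟩ with hl | hr
        · exact absurd (hl b hbI) (tasymm h hbc)
        · exact absurd (hr x hxI) (tasymm h hcx)
    · by_cases hzI : z ∈ I
      · by_cases hxI : x ∈ I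
        · rcases hI.2 b ⟨hbS, hbI⟩ with hl | hr
          · exact absurd (hl x hxI) (tasymm h hxb)
          · exact absurd (hr c hcI) (tasymm h hbc)
        · rcases hI.2 x ⟨hxS, hxI⟩ with hl | hr
          · exact absurd (hl c hcI) (tasymm h hcx)
          · exact hr z hzI
      · have hxI : x ∈ I := hxor.resolve_right hzI
        rcases hI.2 b ⟨hbS, hbI⟩ with hl | hr
        · exact absurd (hl x hxI) (tasymm h hxb)
        · exact absurd (hr c hcI) (tasymm h hbc)
  · rcases hI.2 b ⟨hbS, hbI⟩ with hl | hr
    · exact absurd (hl x hxI) (tasymm h hxb)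
    · exact absurd (hr z hzI) (tasymm h hbz)
private lemma mainRot (h : IsTournament r) (hT : IndecomposableOn r (Set.univ : Set V))
    {a b c : V} (hab : r a b) (hbc : r b c) (hca : r c a)
    (hH : ∀ x ∉ ({a, b, c} : Set V), ∀ z ∉ ({a, b, c} : Set V), x ≠ z →
        ¬ IndecomposableOn r (({a, b, c} : Set V) ∪ {x, z}))
    {x₀ : V} (hx₀ : x₀ ∉ ({a, b, c} : Set V)) (hx₀b : r x₀ b) (hcx₀ : r c x₀) : False := by
  classical
  have hne_ab : a ≠ b := tne h hab
  set A : Set V := {w | w ∉ ({a, b, c} : Set V) ∧ r w b ∧ r c w} with hA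
  have hx₀A : x₀ ∈ A := ⟨hx₀, hx₀b, hcx₀⟩
  have hQint : IsIntervalOn r Set.univ (insert a A) := by
    refine ⟨Set.subset_univ _, ?_⟩
    rintro w ⟨-, hwQ⟩
    have hwa : w ≠ a := fun e => hwQ (e ▸ Set.mem_insert a A)
    have hwA : w ∉ A := fun hw => hwQ (Set.mem_insert_of_mem _ hw)
    by_cases hwb' : w = b
    · subst hwb'
      right
      rintro i (rfl | hiA)
      · exact hab
      · exact hiA.2.1
    by_cases hwc' : w = c
    · subst hwc'
      left
      rintro i (rfl | hiA)
      · exact hca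
      · exact hiA.2.2
    have hwX : w ∉ ({a, b, c} : Set V) := by simp [hwa, hwb', hwc']
    have hpair : ∀ i ∈ A, ¬ IndecomposableOn r (({a, b, c} : Set V) ∪ {i, w}) :=
      fun i hiA => hH i hiA.1 w hwX (fun e => hwA (e ▸ hiA))
    have hiw : ∀ i ∈ A, i ≠ w := fun i hiA e => hwA (e ▸ hiA)
    by_cases hwb : r w b
    · by_cases hcw : r c w
      · exact absurd (⟨hwX, hwb, hcw⟩ : w ∈ A) hwA
      · have hwc : r w c := ttotal h (Ne.symm hwc') hcw
        by_cases hwa2 : r w a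
        · left
          rintro i (rfl | hiA)
          · exact hwa2
          · exact pairB1 h hab hbc hca hiA.1 hiA.2.1 hiA.2.2 hwX (hiw i hiA)
              hwa2 hwb hwc (hpair i hiA)
        · have haw : r a w := ttotal h hwa hwa2
          right
          rintro i (rfl | hiA)
          · exact haw
          · exact pairAb h hab hbc hca hiA.1 hiA.2.1 hiA.2.2 hwX (hiw i hiA)
              hwc haw (hpair i hiA)
    · have hbw : r b w := ttotal h hwb' hwb
      by_cases hwa2 : r w a
      · left
        rintro i (rfl | hiA)
        · exact hwa2
        · exact pairAc h hab hbc hca hiA.1 hiA.2.1 hiA.2.2 hwX (hiw i hiA)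
            hwa2 hbw (hpair i hiA)
      · have haw : r a w := ttotal h hwa hwa2
        by_cases hcw : r c w
        · right
          rintro i (rfl | hiA)
          · exact haw
          · exact pairB2 h hab hbc hca hiA.1 hiA.2.1 hiA.2.2 hwX (hiw i hiA)
              haw hbw hcw (hpair i hiA)
        · have hwc : r w c := ttotal h (Ne.symm hwc') hcw
          right
          rintro i (rfl | hiA)
          · exact haw
          · exact pairAb h hab hbc hca hiA.1 hiA.2.1 hiA.2.2 hwX (hiw i hiA)
              hwc haw (hpair i hiA)
  rcases hT (insert a A) hQint with hQ0 | ⟨w, hQw⟩ | hQu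
  · exact Set.eq_empty_iff_forall_notMem.mp hQ0 a (Set.mem_insert a A)
  · have ha : a ∈ ({w} : Set V) := hQw ▸ Set.mem_insert a A
    have hx₀' : x₀ ∈ ({w} : Set V) := hQw ▸ Set.mem_insert_of_mem _ hx₀A
    have : a = x₀ := ha.trans hx₀'.symm
    exact hx₀ (this ▸ (by simp : a ∈ ({a, b, c} : Set V)))
  · have hbQ : b ∈ insert a A := hQu.symm ▸ Set.mem_univ b
    rcases hbQ with e | hbA
    · exact hne_ab e.symm
    · exact hbA.1 (by simp)
private lemma exists_c3 [Fintype V] (h : IsTournament r) (hcard : 3 ≤ Fintype.card V)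
    (hT : IndecomposableOn r (Set.univ : Set V)) :
    ∃ a b c : V, r a b ∧ r b c ∧ r c a := by
  classical
  by_contra h3
  push_neg at h3
  have hnonempty : Nonempty V := Fintype.card_pos_iff.mp (by omega)
  obtain ⟨m, -, hm⟩ := Finset.exists_max_image Finset.univ
      (fun v => (Finset.univ.filter (fun w => r v w)).card) Finset.univ_nonempty
  have hmax : ∀ y, y ≠ m → r m y := by
    intro y hy
    by_contra hmy
    have hym : r y m := ttotal h (Ne.symm hy) hmy
    have hsub : Finset.univ.filter (fun w => r m w) ⊂ Finset.univ.filter (fun w => r y w) := by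
      rw [Finset.ssubset_def]
      constructor
      · intro v hv
        simp only [Finset.mem_filter, Finset.mem_univ, true_and] at hv ⊢
        have hvy : v ≠ y := fun e => hmy (e ▸ hv)
        have hnvy : ¬ r v y := fun hvy2 => h3 m v y hv hvy2 hym
        exact ttotal h hvy hnvy
      · intro hcon
        have hmem : m ∈ Finset.univ.filter (fun w => r y w) := by
          simp only [Finset.mem_filter, Finset.mem_univ, true_and]; exact hym
        have := hcon hmem
        simp only [Finset.mem_filter, Finset.mem_univ, true_and] at this
        exact h.1 m this
    exact absurd (hm y (Finset.mem_univ y)) (not_le.mpr (Finset.card_lt_card hsub))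
  have hK : IsIntervalOn r Set.univ {v | v ≠ m} := by
    refine ⟨Set.subset_univ _, ?_⟩
    rintro w ⟨-, hw⟩
    have hwm : w = m := by simpa using hw
    subst hwm
    exact Or.inl fun i hi => hmax i hi
  rcases hT _ hK with h0 | ⟨w, hw⟩ | hu
  · have : Nontrivial V := Fintype.one_lt_card_iff_nontrivial.mp (by omega)
    obtain ⟨y, hy⟩ := exists_ne m
    exact Set.eq_empty_iff_forall_notMem.mp h0 y hy
  · have h2 : 1 < (Finset.univ.erase m).card := by
      rw [Finset.card_erase_of_mem (Finset.mem_univ m), Finset.card_univ]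
      omega
    obtain ⟨y, hy, z, hz, hyz⟩ := Finset.one_lt_card.mp h2
    have hym : y ≠ m := (Finset.mem_erase.mp hy).1
    have hzm : z ≠ m := (Finset.mem_erase.mp hz).1
    have h1 : y ∈ ({w} : Set V) := hw ▸ hym
    have h2' : z ∈ ({w} : Set V) := hw ▸ hzm
    exact hyz (h1.trans h2'.symm)
  · have : m ∈ {v | v ≠ m} := hu.symm ▸ Set.mem_univ m
    exact this rfl

end Aux

/-- Every indecomposable tournament of cardinality `≥ 5` admits an
indecomposable subtournament on exactly 5 vertices. -/
theorem indecomposable_sub5 {V : Type*} [Fintype V] (r : V → V → Prop)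
    (h : IsTournament r) (hcard : 5 ≤ Fintype.card V)
    (hT : IndecomposableOn r Set.univ) :
    ∃ X : Set V, X.ncard = 5 ∧ IndecomposableOn r X := by
  classical
  obtain ⟨a, b, c, hab, hbc, hca⟩ := exists_c3 h (by omega) hT
  have hne_ab : a ≠ b := tne h hab
  have hne_bc : b ≠ c := tne h hbc
  have hne_ca : c ≠ a := tne h hca
  -- at least two vertices outside {a,b,c}
  have hsF : ({a, b, c} : Finset V).card ≤ 3 :=
    le_trans (Finset.card_insert_le _ _)
      (by have := Finset.card_insert_le b ({c} : Finset V); rw [Finset.card_singleton] at this; omega)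
  have h2 : 1 < (Finset.univ \ ({a, b, c} : Finset V)).card := by
    rw [Finset.card_sdiff_of_subset (Finset.subset_univ _), Finset.card_univ]
    omega
  obtain ⟨x, hxmem, y, hymem, hxy⟩ := Finset.one_lt_card.mp h2
  have hxX : x ∉ ({a, b, c} : Set V) := by
    have := (Finset.mem_sdiff.mp hxmem).2
    simp only [Finset.mem_insert, Finset.mem_singleton] at this
    simpa using this
  by_cases hpair : ∃ x' ∉ ({a, b, c} : Set V), ∃ y' ∉ ({a, b, c} : Set V), x' ≠ y' ∧
      IndecomposableOn r (({a, b, c} : Set V) ∪ {x', y'})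
  · obtain ⟨x', hx', y', hy', hne', hind⟩ := hpair
    refine ⟨({a, b, c} : Set V) ∪ {x', y'}, ?_, hind⟩
    have hxa : x' ≠ a := fun e => hx' (by simp [e])
    have hxb : x' ≠ b := fun e => hx' (by simp [e])
    have hxc : x' ≠ c := fun e => hx' (by simp [e])
    have hya : y' ≠ a := fun e => hy' (by simp [e])
    have hyb : y' ≠ b := fun e => hy' (by simp [e])
    have hyc : y' ≠ c := fun e => hy' (by simp [e])
    have hreorg : (({a, b, c} : Set V) ∪ {x', y'}) =
        insert a (insert b (insert c (insert x' {y'}))) := by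
      ext w
      simp only [Set.mem_union, Set.mem_insert_iff, Set.mem_singleton_iff]
      tauto
    rw [hreorg]
    rw [Set.ncard_insert_of_notMem (by
      simp only [Set.mem_insert_iff, Set.mem_singleton_iff]
      push_neg
      exact ⟨hne_ab, hne_ca.symm, hxa.symm, hya.symm⟩) (Set.toFinite _)]
    rw [Set.ncard_insert_of_notMem (by
      simp only [Set.mem_insert_iff, Set.mem_singleton_iff]
      push_neg
      exact ⟨hne_bc, hxb.symm, hyb.symm⟩) (Set.toFinite _)]
    rw [Set.ncard_insert_of_notMem (by
      simp only [Set.mem_insert_iff, Set.mem_singleton_iff]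
      push_neg
      exact ⟨hxc.symm, hyc.symm⟩) (Set.toFinite _)]
    rw [Set.ncard_insert_of_notMem (by simpa using hne') (Set.toFinite _)]
    rw [Set.ncard_singleton]
  · push_neg at hpair
    exfalso
    by_cases hB : ∀ w, w ∉ ({a, b, c} : Set V) →
        (∀ i ∈ ({a, b, c} : Set V), r w i) ∨ (∀ i ∈ ({a, b, c} : Set V), r i w)
    · have hXint : IsIntervalOn r Set.univ ({a, b, c} : Set V) :=
        ⟨Set.subset_univ _, fun w hw => hB w hw.2⟩
      rcases hT _ hXint with h0 | ⟨w, hw⟩ | hu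
      · exact Set.eq_empty_iff_forall_notMem.mp h0 a (by simp)
      · have ha : a ∈ ({w} : Set V) := hw ▸ (by simp : a ∈ ({a, b, c} : Set V))
        have hb : b ∈ ({w} : Set V) := hw ▸ (by simp : b ∈ ({a, b, c} : Set V))
        exact hne_ab (ha.trans hb.symm)
      · exact hxX (hu.symm ▸ Set.mem_univ x)
    · push_neg at hB
      obtain ⟨w, hwX, hw1, hw2⟩ := hB
      have hwa' : w ≠ a := fun e => hwX (by simp [e])
      have hwb' : w ≠ b := fun e => hwX (by simp [e])
      have hwc' : w ≠ c := fun e => hwX (by simp [e])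
      -- rotated versions of hpair / hwX
      have hrot_b : ({b, c, a} : Set V) = {a, b, c} := by
        ext u
        simp only [Set.mem_insert_iff, Set.mem_singleton_iff]
        tauto
      have hrot_c : ({c, a, b} : Set V) = {a, b, c} := by
        ext u
        simp only [Set.mem_insert_iff, Set.mem_singleton_iff]
        tauto
      have hpair_b : ∀ x' ∉ ({b, c, a} : Set V), ∀ y' ∉ ({b, c, a} : Set V), x' ≠ y' →
          ¬ IndecomposableOn r (({b, c, a} : Set V) ∪ {x', y'}) := by
        rw [hrot_b]; exact hpair
      have hpair_c : ∀ x' ∉ ({c, a, b} : Set V), ∀ y' ∉ ({c, a, b} : Set V), x' ≠ y' →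
          ¬ IndecomposableOn r (({c, a, b} : Set V) ∪ {x', y'}) := by
        rw [hrot_c]; exact hpair
      have hwX_b : w ∉ ({b, c, a} : Set V) := by rw [hrot_b]; exact hwX
      have hwX_c : w ∉ ({c, a, b} : Set V) := by rw [hrot_c]; exact hwX
      by_cases hwb : r w b
      · by_cases hwc : r w c
        · -- w beats b and c; check a
          by_cases hwa : r w a
          · -- beats all: contradicts hw1
            obtain ⟨i, hi, hni⟩ := hw1
            rcases (by simpa using hi : i = a ∨ i = b ∨ i = c) with rfl | rfl | rfl
            exacts [hni hwa, hni hwb, hni hwc]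
          · -- pattern (0,1,1) : class A_b, rotation (b,c,a)
            have haw : r a w := ttotal h hwa' hwa
            exact mainRot h hT hbc hca hab hpair_b hwX_b hwc haw
        · -- r w b, ¬ r w c : class A_a
          have hcw : r c w := ttotal h (Ne.symm hwc').symm hwc
          exact mainRot h hT hab hbc hca hpair hwX hwb hcw
      · by_cases hwa : r w a
        · -- r w a, ¬ r w b: class A_c, rotation (c,a,b)
          have hbw : r b w := ttotal h hwb' hwb
          exact mainRot h hT hca hab hbc hpair_c hwX_c hwa hbw
        · -- ¬ r w a, ¬ r w b: check c
          by_cases hwc : r w c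
          · -- pattern (0,0,1): A_b
            have haw : r a w := ttotal h hwa' hwa
            exact mainRot h hT hbc hca hab hpair_b hwX_b hwc haw
          · -- loses to all: contradicts hw2
            obtain ⟨i, hi, hni⟩ := hw2
            rcases (by simpa using hi : i = a ∨ i = b ∨ i = c) with rfl | rfl | rfl
            · exact hni (ttotal h hwa' hwa)
            · exact hni (ttotal h hwb' hwb)
            · exact hni (ttotal h hwc' hwc)
end

section
/- For every n ≥ 5, the tournament F_{n+1} on {0,…,n} with arcs (i,j) whenever i+1 < j or i = j+1 is indecomposable, and every induced indecomposable subtournament of F_{n+1} on 5 vertices is isomorphic to W₅. -/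
theorem Ft_indec (n : ℕ) (hn : 5 ≤ n) : IndecomposableOn (Ft n) (Set.univ : Set (Fin (n+1))) := by
  intro I hI
  obtain ⟨-, hint⟩ := hI
  have key : ∀ x : Fin (n+1), x ∉ I → (∀ i ∈ I, Ft n x i) ∨ (∀ i ∈ I, Ft n i x) :=
    fun x hx => hint x ⟨trivial, hx⟩
  by_cases hsub : ∀ x ∈ I, ∀ y ∈ I, x = y
  · rcases Set.eq_empty_or_nonempty I with h | ⟨a, ha⟩
    · exact Or.inl h
    · exact Or.inr (Or.inl ⟨a, Set.eq_singleton_iff_unique_mem.2 ⟨ha, fun x hx => hsub x hx a ha⟩⟩)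
  push_neg at hsub
  obtain ⟨p, hp, q, hq, hpq⟩ := hsub
  -- min element is 0
  have h0 : (⟨0, by omega⟩ : Fin (n+1)) ∈ I := by
    obtain ⟨a, haI, hamin⟩ := Set.exists_min_image I id I.toFinite ⟨p, hp⟩
    simp only [id] at hamin
    have ha0 : a.val = 0 := by
      by_contra ha0
      set x : Fin (n+1) := ⟨a.val - 1, by omega⟩ with hxdef
      have hxv : x.val = a.val - 1 := rfl
      have hxI : x ∉ I := by
        intro h
        have := hamin x h
        rw [Fin.le_def] at this
        omega
      obtain ⟨b, hbI, hba⟩ : ∃ b ∈ I, b ≠ a := by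
        by_cases hpa : p = a
        · exact ⟨q, hq, by rw [hpa] at hpq; exact fun h => hpq h.symm⟩
        · exact ⟨p, hp, hpa⟩
      have hab : a.val < b.val := by
        have := hamin b hbI
        rw [Fin.le_def] at this
        have : a.val ≠ b.val := fun h => hba (Fin.ext h.symm)
        omega
      rcases key x hxI with h | h
      · have := h a haI; simp only [Ft] at this; omega
      · have := h b hbI; simp only [Ft] at this; omega
    exact (Fin.ext ha0 : a = ⟨0, by omega⟩) ▸ haI
  -- max element is n
  have hN : (⟨n, by omega⟩ : Fin (n+1)) ∈ I := by
    obtain ⟨a, haI, hamax⟩ := Set.exists_max_image I id I.toFinite ⟨p, hp⟩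
    simp only [id] at hamax
    have han : a.val = n := by
      by_contra han
      have halt : a.val < n := by have := a.isLt; omega
      set x : Fin (n+1) := ⟨a.val + 1, by omega⟩ with hxdef
      have hxv : x.val = a.val + 1 := rfl
      have hxI : x ∉ I := by
        intro h
        have := hamax x h
        rw [Fin.le_def] at this
        omega
      obtain ⟨b, hbI, hba⟩ : ∃ b ∈ I, b ≠ a := by
        by_cases hpa : p = a
        · exact ⟨q, hq, by rw [hpa] at hpq; exact fun h => hpq h.symm⟩
        · exact ⟨p, hp, hpa⟩
      have hab : b.val < a.val := by
        have := hamax b hbI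
        rw [Fin.le_def] at this
        have : a.val ≠ b.val := fun h => hba (Fin.ext h.symm)
        omega
      rcases key x hxI with h | h
      · have := h b hbI; simp only [Ft] at this; omega
      · have := h a haI; simp only [Ft] at this; omega
    exact (Fin.ext han : a = ⟨n, by omega⟩) ▸ haI
  have mid : ∀ x : Fin (n+1), 2 ≤ x.val → x.val ≤ n - 2 → x ∈ I := by
    intro x h2 hle
    by_contra hx
    rcases key x hx with h | h
    · have := h _ h0; simp only [Ft] at this; omega
    · have := h _ hN; simp only [Ft] at this; omega
  have h1 : (⟨1, by omega⟩ : Fin (n+1)) ∈ I := by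
    by_contra hx
    have h2 : (⟨2, by omega⟩ : Fin (n+1)) ∈ I := mid _ (by simp) (by simp; omega)
    rcases key _ hx with h | h
    · have := h _ h2; simp only [Ft] at this; omega
    · have := h _ h0; simp only [Ft] at this; omega
  have hN1 : (⟨n-1, by omega⟩ : Fin (n+1)) ∈ I := by
    by_contra hx
    have h2 : (⟨n-2, by omega⟩ : Fin (n+1)) ∈ I := mid _ (by simp; omega) (by simp)
    rcases key _ hx with h | h
    · have := h _ hN; simp only [Ft] at this; omega
    · have := h _ h2; simp only [Ft] at this; omega
  right; right
  rw [Set.eq_univ_iff_forall]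
  intro x
  by_contra hx
  have e0 : x.val ≠ 0 := fun h => hx ((Fin.ext h : x = ⟨0, by omega⟩) ▸ h0)
  have e1 : x.val ≠ 1 := fun h => hx ((Fin.ext h : x = ⟨1, by omega⟩) ▸ h1)
  have em : ¬ (2 ≤ x.val ∧ x.val ≤ n - 2) := fun ⟨h2, hle⟩ => hx (mid x h2 hle)
  have eN1 : x.val ≠ n - 1 := fun h => hx ((Fin.ext h : x = ⟨n-1, by omega⟩) ▸ hN1)
  have eN : x.val ≠ n := fun h => hx ((Fin.ext h : x = ⟨n, by omega⟩) ▸ hN)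
  have := x.isLt
  omega

theorem Ft_sub5 (n : ℕ) (hn : 5 ≤ n) :
    ∀ X : Set (Fin (n+1)), X.ncard = 5 → IndecomposableOn (Ft n) X →
        ∃ f : Fin (2*2+1) → Fin (n+1), Function.Injective f ∧ Set.range f = X ∧
          ∀ a b, Wt 2 a b ↔ Ft n (f a) (f b) := by
  classical
  intro X hcard hind
  have hfin : X.toFinset.card = 5 := by
    rw [Set.ncard_eq_toFinset_card'] at hcard; exact hcard
  set e := X.toFinset.orderIsoOfFin hfin with he
  set a : Fin 5 → Fin (n+1) := fun i => (e i : Fin (n+1)) with ha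
  have haX : ∀ i, a i ∈ X := fun i => Set.mem_toFinset.1 (e i).2
  have hmono : ∀ i j : Fin 5, i < j → (a i).val < (a j).val := by
    intro i j hij
    have := e.strictMono hij
    exact this
  have hsurj : ∀ x ∈ X, ∃ i, a i = x := by
    intro x hx
    refine ⟨e.symm ⟨x, Set.mem_toFinset.2 hx⟩, ?_⟩
    rw [ha]
    exact congrArg Subtype.val (e.apply_symm_apply _)
  have h01 : (a 0).val < (a 1).val := hmono 0 1 (by decide)
  have h12 : (a 1).val < (a 2).val := hmono 1 2 (by decide)
  have h23 : (a 2).val < (a 3).val := hmono 2 3 (by decide)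
  have h34 : (a 3).val < (a 4).val := hmono 3 4 (by decide)
  -- no gaps
  have c1 : (a 1).val = (a 0).val + 1 := by
    by_contra hne
    have hgap : (a 0).val + 1 < (a 1).val := by omega
    have hIi : IsIntervalOn (Ft n) X {a 1, a 2, a 3, a 4} := by
      refine ⟨?_, ?_⟩
      · intro y hy
        simp only [Set.mem_insert_iff, Set.mem_singleton_iff] at hy
        rcases hy with h|h|h|h <;> exact h ▸ haX _
      · intro x ⟨hxX, hxI⟩
        obtain ⟨i, rfl⟩ := hsurj x hxX
        simp only [Set.mem_insert_iff, Set.mem_singleton_iff] at hxI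
        push_neg at hxI
        have hi0 : i = 0 := by
          fin_cases i <;> simp_all
        subst hi0
        left
        intro y hy
        simp only [Set.mem_insert_iff, Set.mem_singleton_iff] at hy
        rcases hy with h|h|h|h <;> subst h <;> simp only [Ft] <;> omega
    rcases hind _ hIi with h | ⟨c, h⟩ | h
    · exact absurd (h ▸ (by simp : a 1 ∈ ({a 1, a 2, a 3, a 4} : Set _))) (Set.notMem_empty _)
    · have h1 : a 1 ∈ ({c} : Set _) := by
        rw [← h]; simp
      have h2 : a 2 ∈ ({c} : Set _) := by
        rw [← h]; simp
      rw [Set.mem_singleton_iff] at h1 h2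
      have : (a 1).val = (a 2).val := by rw [h1, h2]
      omega
    · have : a 0 ∈ ({a 1, a 2, a 3, a 4} : Set _) := h ▸ haX 0
      simp only [Set.mem_insert_iff, Set.mem_singleton_iff] at this
      rcases this with h|h|h|h <;> (have := congrArg Fin.val h; omega)
  have hcase : ∀ j : Fin 5, j = 0 ∨ j = 1 ∨ j = 2 ∨ j = 3 ∨ j = 4 := by decide
  have lower : ∀ (S : Set (Fin (n+1))) (k : ℕ),
      (∀ y ∈ S, ∃ j : Fin 5, j.val ≤ k ∧ a j = y) → (∀ j : Fin 5, j.val ≤ k → a j ∈ S) →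
      (∀ j i : Fin 5, j.val ≤ k → k < i.val → (a j).val + 1 < (a i).val) →
      IsIntervalOn (Ft n) X S := by
    intro S k hSsub hSsup hgap
    refine ⟨fun y hy => (hSsub y hy).elim (fun j hj => hj.2 ▸ haX j), ?_⟩
    intro x ⟨hxX, hxS⟩
    obtain ⟨i, rfl⟩ := hsurj x hxX
    have hik : k < i.val := by
      by_contra hik
      exact hxS (hSsup i (not_lt.1 hik))
    right
    intro y hy
    obtain ⟨j, hjk, rfl⟩ := hSsub y hy
    exact Or.inl (hgap j i hjk hik)
  have nontriv : ∀ (S : Set (Fin (n+1))) (p q r : Fin 5), (a p).val < (a q).val → a p ∈ S →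
      a q ∈ S → a r ∉ S → ¬ (S = ∅ ∨ (∃ c, S = {c}) ∨ S = X) := by
    intro S p q r hpq hpS hqS hrS h
    rcases h with h | ⟨c, h⟩ | h
    · rw [h] at hpS; exact (Set.notMem_empty _ hpS)
    · rw [h, Set.mem_singleton_iff] at hpS hqS
      rw [hpS, hqS] at hpq; omega
    · exact hrS (h ▸ haX r)
  have c2 : (a 2).val = (a 1).val + 1 := by
    by_contra hne
    refine nontriv {a 0, a 1} 0 1 2 (by omega) (by simp) (by simp) ?_
      (hind _ (lower {a 0, a 1} 1 ?_ ?_ ?_))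
    · intro h
      simp only [Set.mem_insert_iff, Set.mem_singleton_iff] at h
      rcases h with h|h <;> (have := congrArg Fin.val h; omega)
    · intro y hy
      simp only [Set.mem_insert_iff, Set.mem_singleton_iff] at hy
      rcases hy with h|h
      · exact ⟨0, by decide, h.symm⟩
      · exact ⟨1, by decide, h.symm⟩
    · intro j hj
      rcases hcase j with rfl|rfl|rfl|rfl|rfl <;>
        first
          | exact Set.mem_insert _ _
          | exact Set.mem_insert_of_mem _ rfl
          | exact absurd hj (by decide)
    · intro j i hj hi
      rcases hcase j with rfl|rfl|rfl|rfl|rfl <;> rcases hcase i with rfl|rfl|rfl|rfl|rfl <;>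
        first
          | exact absurd hj (by decide)
          | exact absurd hi (by decide)
          | omega
  have c3 : (a 3).val = (a 2).val + 1 := by
    by_contra hne
    refine nontriv {a 0, a 1, a 2} 0 1 3 (by omega) (by simp) (by simp) ?_
      (hind _ (lower {a 0, a 1, a 2} 2 ?_ ?_ ?_))
    · intro h
      simp only [Set.mem_insert_iff, Set.mem_singleton_iff] at h
      rcases h with h|h|h <;> (have := congrArg Fin.val h; omega)
    · intro y hy
      simp only [Set.mem_insert_iff, Set.mem_singleton_iff] at hy
      rcases hy with h|h|h
      · exact ⟨0, by decide, h.symm⟩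
      · exact ⟨1, by decide, h.symm⟩
      · exact ⟨2, by decide, h.symm⟩
    · intro j hj
      rcases hcase j with rfl|rfl|rfl|rfl|rfl <;>
        first
          | exact Set.mem_insert _ _
          | exact Set.mem_insert_of_mem _ (Set.mem_insert _ _)
          | exact Set.mem_insert_of_mem _ (Set.mem_insert_of_mem _ rfl)
          | exact absurd hj (by decide)
    · intro j i hj hi
      rcases hcase j with rfl|rfl|rfl|rfl|rfl <;> rcases hcase i with rfl|rfl|rfl|rfl|rfl <;>
        first
          | exact absurd hj (by decide)
          | exact absurd hi (by decide)
          | omega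
  have c4 : (a 4).val = (a 3).val + 1 := by
    by_contra hne
    refine nontriv {a 0, a 1, a 2, a 3} 0 1 4 (by omega) (by simp) (by simp) ?_
      (hind _ (lower {a 0, a 1, a 2, a 3} 3 ?_ ?_ ?_))
    · intro h
      simp only [Set.mem_insert_iff, Set.mem_singleton_iff] at h
      rcases h with h|h|h|h <;> (have := congrArg Fin.val h; omega)
    · intro y hy
      simp only [Set.mem_insert_iff, Set.mem_singleton_iff] at hy
      rcases hy with h|h|h|h
      · exact ⟨0, by decide, h.symm⟩
      · exact ⟨1, by decide, h.symm⟩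
      · exact ⟨2, by decide, h.symm⟩
      · exact ⟨3, by decide, h.symm⟩
    · intro j hj
      rcases hcase j with rfl|rfl|rfl|rfl|rfl <;>
        first
          | exact Set.mem_insert _ _
          | exact Set.mem_insert_of_mem _ (Set.mem_insert _ _)
          | exact Set.mem_insert_of_mem _ (Set.mem_insert_of_mem _ (Set.mem_insert _ _))
          | exact Set.mem_insert_of_mem _ (Set.mem_insert_of_mem _
              (Set.mem_insert_of_mem _ rfl))
          | exact absurd hj (by decide)
    · intro j i hj hi
      rcases hcase j with rfl|rfl|rfl|rfl|rfl <;> rcases hcase i with rfl|rfl|rfl|rfl|rfl <;>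
        first
          | exact absurd hj (by decide)
          | exact absurd hi (by decide)
          | omega
  -- build the isomorphism
  have hcase2 : ∀ j : Fin (2*2+1), j = 0 ∨ j = 1 ∨ j = 2 ∨ j = 3 ∨ j = 4 := by decide
  refine ⟨![a 1, a 0, a 4, a 3, a 2], ?_, ?_, ?_⟩
  · intro i j hij
    rcases hcase2 i with rfl|rfl|rfl|rfl|rfl <;> rcases hcase2 j with rfl|rfl|rfl|rfl|rfl
    · rfl
    · have hv : (a 1).val = (a 0).val := congrArg Fin.val hij
      omega
    · have hv : (a 1).val = (a 4).val := congrArg Fin.val hij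
      omega
    · have hv : (a 1).val = (a 3).val := congrArg Fin.val hij
      omega
    · have hv : (a 1).val = (a 2).val := congrArg Fin.val hij
      omega
    · have hv : (a 0).val = (a 1).val := congrArg Fin.val hij
      omega
    · rfl
    · have hv : (a 0).val = (a 4).val := congrArg Fin.val hij
      omega
    · have hv : (a 0).val = (a 3).val := congrArg Fin.val hij
      omega
    · have hv : (a 0).val = (a 2).val := congrArg Fin.val hij
      omega
    · have hv : (a 4).val = (a 1).val := congrArg Fin.val hij
      omega
    · have hv : (a 4).val = (a 0).val := congrArg Fin.val hij
      omega
    · rfl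
    · have hv : (a 4).val = (a 3).val := congrArg Fin.val hij
      omega
    · have hv : (a 4).val = (a 2).val := congrArg Fin.val hij
      omega
    · have hv : (a 3).val = (a 1).val := congrArg Fin.val hij
      omega
    · have hv : (a 3).val = (a 0).val := congrArg Fin.val hij
      omega
    · have hv : (a 3).val = (a 4).val := congrArg Fin.val hij
      omega
    · rfl
    · have hv : (a 3).val = (a 2).val := congrArg Fin.val hij
      omega
    · have hv : (a 2).val = (a 1).val := congrArg Fin.val hij
      omega
    · have hv : (a 2).val = (a 0).val := congrArg Fin.val hij
      omega
    · have hv : (a 2).val = (a 4).val := congrArg Fin.val hij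
      omega
    · have hv : (a 2).val = (a 3).val := congrArg Fin.val hij
      omega
    · rfl
  · apply Set.eq_of_subset_of_subset
    · rintro x ⟨i, rfl⟩
      rcases hcase2 i with rfl|rfl|rfl|rfl|rfl
      · exact haX 1
      · exact haX 0
      · exact haX 4
      · exact haX 3
      · exact haX 2
    · intro x hx
      obtain ⟨i, rfl⟩ := hsurj x hx
      rcases hcase i with rfl|rfl|rfl|rfl|rfl
      · exact ⟨1, rfl⟩
      · exact ⟨0, rfl⟩
      · exact ⟨4, rfl⟩
      · exact ⟨3, rfl⟩
      · exact ⟨2, rfl⟩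
  · intro b c
    rcases hcase2 b with rfl|rfl|rfl|rfl|rfl <;> rcases hcase2 c with rfl|rfl|rfl|rfl|rfl
    · exact iff_of_false (by unfold Wt; decide) (show ¬((a 1).val + 1 < (a 1).val ∨ (a 1).val = (a 1).val + 1) by omega)
    · exact iff_of_true (by unfold Wt; decide) (show (a 1).val + 1 < (a 0).val ∨ (a 1).val = (a 0).val + 1 by omega)
    · exact iff_of_true (by unfold Wt; decide) (show (a 1).val + 1 < (a 4).val ∨ (a 1).val = (a 4).val + 1 by omega)
    · exact iff_of_true (by unfold Wt; decide) (show (a 1).val + 1 < (a 3).val ∨ (a 1).val = (a 3).val + 1 by omega)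
    · exact iff_of_false (by unfold Wt; decide) (show ¬((a 1).val + 1 < (a 2).val ∨ (a 1).val = (a 2).val + 1) by omega)
    · exact iff_of_false (by unfold Wt; decide) (show ¬((a 0).val + 1 < (a 1).val ∨ (a 0).val = (a 1).val + 1) by omega)
    · exact iff_of_false (by unfold Wt; decide) (show ¬((a 0).val + 1 < (a 0).val ∨ (a 0).val = (a 0).val + 1) by omega)
    · exact iff_of_true (by unfold Wt; decide) (show (a 0).val + 1 < (a 4).val ∨ (a 0).val = (a 4).val + 1 by omega)
    · exact iff_of_true (by unfold Wt; decide) (show (a 0).val + 1 < (a 3).val ∨ (a 0).val = (a 3).val + 1 by omega)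
    · exact iff_of_true (by unfold Wt; decide) (show (a 0).val + 1 < (a 2).val ∨ (a 0).val = (a 2).val + 1 by omega)
    · exact iff_of_false (by unfold Wt; decide) (show ¬((a 4).val + 1 < (a 1).val ∨ (a 4).val = (a 1).val + 1) by omega)
    · exact iff_of_false (by unfold Wt; decide) (show ¬((a 4).val + 1 < (a 0).val ∨ (a 4).val = (a 0).val + 1) by omega)
    · exact iff_of_false (by unfold Wt; decide) (show ¬((a 4).val + 1 < (a 4).val ∨ (a 4).val = (a 4).val + 1) by omega)
    · exact iff_of_true (by unfold Wt; decide) (show (a 4).val + 1 < (a 3).val ∨ (a 4).val = (a 3).val + 1 by omega)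
    · exact iff_of_false (by unfold Wt; decide) (show ¬((a 4).val + 1 < (a 2).val ∨ (a 4).val = (a 2).val + 1) by omega)
    · exact iff_of_false (by unfold Wt; decide) (show ¬((a 3).val + 1 < (a 1).val ∨ (a 3).val = (a 1).val + 1) by omega)
    · exact iff_of_false (by unfold Wt; decide) (show ¬((a 3).val + 1 < (a 0).val ∨ (a 3).val = (a 0).val + 1) by omega)
    · exact iff_of_false (by unfold Wt; decide) (show ¬((a 3).val + 1 < (a 4).val ∨ (a 3).val = (a 4).val + 1) by omega)
    · exact iff_of_false (by unfold Wt; decide) (show ¬((a 3).val + 1 < (a 3).val ∨ (a 3).val = (a 3).val + 1) by omega)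
    · exact iff_of_true (by unfold Wt; decide) (show (a 3).val + 1 < (a 2).val ∨ (a 3).val = (a 2).val + 1 by omega)
    · exact iff_of_true (by unfold Wt; decide) (show (a 2).val + 1 < (a 1).val ∨ (a 2).val = (a 1).val + 1 by omega)
    · exact iff_of_false (by unfold Wt; decide) (show ¬((a 2).val + 1 < (a 0).val ∨ (a 2).val = (a 0).val + 1) by omega)
    · exact iff_of_true (by unfold Wt; decide) (show (a 2).val + 1 < (a 4).val ∨ (a 2).val = (a 4).val + 1 by omega)
    · exact iff_of_false (by unfold Wt; decide) (show ¬((a 2).val + 1 < (a 3).val ∨ (a 2).val = (a 3).val + 1) by omega)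
    · exact iff_of_false (by unfold Wt; decide) (show ¬((a 2).val + 1 < (a 2).val ∨ (a 2).val = (a 2).val + 1) by omega)

/-- For `n ≥ 5`, `F_{n+1}` is indecomposable and every indecomposable
induced subtournament of `F_{n+1}` on 5 vertices is isomorphic to `W₅`. -/
theorem Ft_indecomposable_sub5_W5 (n : ℕ) (hn : 5 ≤ n) :
    IndecomposableOn (Ft n) Set.univ ∧
      ∀ X : Set (Fin (n+1)), X.ncard = 5 → IndecomposableOn (Ft n) X →
        ∃ f : Fin (2*2+1) → Fin (n+1), Function.Injective f ∧ Set.range f = X ∧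
          ∀ a b, Wt 2 a b ↔ Ft n (f a) (f b) := by
  exact ⟨Ft_indec n hn, Ft_sub5 n hn⟩
end
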